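/- arXiv:1304.5809 — 2 statements merged into one kernel-verified Lean document; each statement's English description precedes it below -/
import Mathlib

section
/- Let f₁, f₂ be Laurent polynomials in two variables that are both η-homogeneous (of degrees ν₁, ν₂ respectively) for the same primitive vector η ∈ ℤ² with ν₁, ν₂ not both zero. Then the toric Jacobian J^T = x₁x₂·det(∂f_i/∂x_j) lies in the ideal generated by f₁ and f₂ in the Laurent polynomial ring. -/
open Finsupp

/-- A Laurent polynomial in two variables over `K`. -/
abbrev LaurentPoly2 (K : Type*) [CommRing K] := AddMonoidAlgebra K (Fin 2 → ℤ)

/-- The operator `x_i ∂/∂x_i` on Laurent polynomials. -/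
noncomputable def xd {K : Type*} [CommRing K] (i : Fin 2)
    (f : LaurentPoly2 K) : LaurentPoly2 K :=
  f.coeff.sum fun a c => AddMonoidAlgebra.ofCoeff (Finsupp.single a ((a i : ℤ) • c))

/-- The toric Jacobian `x₁x₂·det(∂f_i/∂x_j) = det(x_j ∂f_i/∂x_j)` of two bivariate
Laurent polynomials. -/
noncomputable def toricJacobian {K : Type*} [CommRing K] (f₁ f₂ : LaurentPoly2 K) :
    LaurentPoly2 K :=
  xd 0 f₁ * xd 1 f₂ - xd 1 f₁ * xd 0 f₂

lemma xd_apply {K : Type*} [CommRing K] (i : Fin 2) (f : LaurentPoly2 K)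
    (b : Fin 2 → ℤ) : (xd i f).coeff b = b i • f.coeff b := by
  classical
  unfold xd
  rw [← AddMonoidAlgebra.ofCoeff_finsuppSum, AddMonoidAlgebra.coeff_ofCoeff]
  rw [Finsupp.sum_apply]
  rw [Finsupp.sum]
  simp only [Finsupp.single_apply]
  rw [Finset.sum_ite_eq' f.coeff.support b (fun a => a i • f.coeff a)]
  by_cases h : b ∈ f.coeff.support
  · simp [h]
  · simp [h, Finsupp.notMem_support_iff.mp h]

lemma euler {K : Type*} [CommRing K] (f : LaurentPoly2 K) (η : Fin 2 → ℤ) (ν : ℤ)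
    (hhom : ∀ a ∈ f.coeff.support, (∑ i, η i * a i) = ν) :
    (η 0 : LaurentPoly2 K) * xd 0 f + (η 1 : LaurentPoly2 K) * xd 1 f
      = (ν : LaurentPoly2 K) * f := by
  have key : η 0 • xd 0 f + η 1 • xd 1 f = ν • f := by
    ext b
    show η 0 • (xd 0 f).coeff b + η 1 • (xd 1 f).coeff b = ν • f.coeff b
    rw [xd_apply, xd_apply, smul_smul, smul_smul]
    by_cases h : b ∈ f.coeff.support
    · rw [← add_smul]
      have := hhom b h
      rw [Fin.sum_univ_two] at this
      rw [this]
    · rw [Finsupp.notMem_support_iff.mp h]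
      simp only [smul_zero, add_zero]
  simpa [zsmul_eq_mul] using key

/-- If `f₁, f₂` are bivariate Laurent polynomials which are `η`-homogeneous of degrees
`ν₁, ν₂` for the same primitive vector `η ∈ ℤ²`, with `ν₁, ν₂` not both zero, then the
toric Jacobian lies in the ideal generated by `f₁` and `f₂`. -/
theorem toricJacobian_mem_ideal_of_homogeneous {K : Type*} [Field K]
    (f₁ f₂ : LaurentPoly2 K) (η : Fin 2 → ℤ) (ν₁ ν₂ : ℤ)
    (hprim : IsCoprime (η 0) (η 1))
    (hν : ν₁ ≠ 0 ∨ ν₂ ≠ 0)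
    (hhom₁ : ∀ a ∈ f₁.coeff.support, (∑ i, η i * a i) = ν₁)
    (hhom₂ : ∀ a ∈ f₂.coeff.support, (∑ i, η i * a i) = ν₂) :
    toricJacobian f₁ f₂ ∈ Ideal.span ({f₁, f₂} : Set (LaurentPoly2 K)) := by
  obtain ⟨u, v, huv⟩ := hprim
  have E1 := euler f₁ η ν₁ hhom₁
  have E2 := euler f₂ η ν₂ hhom₂
  have hc : (u : LaurentPoly2 K) * (η 0 : LaurentPoly2 K)
      + (v : LaurentPoly2 K) * (η 1 : LaurentPoly2 K) = 1 := by
    have := congrArg (fun z : ℤ => (z : LaurentPoly2 K)) huv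
    push_cast at this
    simpa using this
  rw [Ideal.mem_span_pair]
  refine ⟨(u : LaurentPoly2 K) * ν₁ * xd 1 f₂ - (v : LaurentPoly2 K) * ν₁ * xd 0 f₂,
    (v : LaurentPoly2 K) * ν₂ * xd 0 f₁ - (u : LaurentPoly2 K) * ν₂ * xd 1 f₁, ?_⟩
  unfold toricJacobian
  linear_combination ((v : LaurentPoly2 K) * xd 0 f₂ - (u : LaurentPoly2 K) * xd 1 f₂) * E1
    + ((u : LaurentPoly2 K) * xd 1 f₁ - (v : LaurentPoly2 K) * xd 0 f₁) * E2
    + (xd 0 f₁ * xd 1 f₂ - xd 1 f₁ * xd 0 f₂) * hc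
end

section
/- Multiplicativity of the univariate resultant: for polynomials f, g, h over a commutative ring, Res(f, g·h) = Res(f, g)·Res(f, h). -/
open Polynomial

/-- The Sylvester matrix of `f`, `g`, regarded as having degrees `m` and `n`. -/
noncomputable def sylvester {R : Type*} [CommRing R] (m n : ℕ) (f g : R[X]) :
    Matrix (Fin (n + m)) (Fin (n + m)) R := fun i j =>
  if (i : ℕ) < n then
    (if (i : ℕ) ≤ (j : ℕ) then f.coeff ((j : ℕ) - (i : ℕ)) else 0)
  else
    (if (i : ℕ) - n ≤ (j : ℕ) then g.coeff ((j : ℕ) - ((i : ℕ) - n)) else 0)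

/-- The resultant of `f` and `g` of respective degrees `m`, `n`. -/
noncomputable def res {R : Type*} [CommRing R] (m n : ℕ) (f g : R[X]) : R :=
  (sylvester m n f g).det

section Aux
variable {R : Type*} [CommRing R]

/-- matrix of multiplication by `g` modulo `f` (transposed). -/
noncomputable def philMat (m : ℕ) (f g : R[X]) : Matrix (Fin m) (Fin m) R :=
  fun k j => ((X ^ (k : ℕ) * g) %ₘ f).coeff j

lemma philMat_mul (m : ℕ) (f g h : R[X]) (hf : f.Monic) (hfd : f.natDegree = m) :
    philMat m f (g * h) = philMat m f g * philMat m f h := by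
  ext k j
  have hm : 0 < m := k.pos
  have hf1 : f ≠ 1 := by
    intro h1
    rw [h1, natDegree_one] at hfd; omega
  set r : R[X] := (X ^ (k : ℕ) * g) %ₘ f with hr
  have hdeg : r.natDegree < m := hfd ▸ natDegree_modByMonic_lt _ hf hf1
  have key : (X ^ (k : ℕ) * (g * h)) %ₘ f = (r * h) %ₘ f := by
    conv_lhs => rw [← mul_assoc, ← modByMonic_add_div (X ^ (k : ℕ) * g) f]
    rw [add_mul, add_modByMonic, mul_assoc, self_mul_modByMonic hf, add_zero]
  have hrsum : r * h = ∑ l ∈ Finset.range m, (r.coeff l) • (X ^ l * h) := by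
    conv_lhs => rw [as_sum_range' r m hdeg, Finset.sum_mul]
    refine Finset.sum_congr rfl fun l _ => ?_
    rw [← C_mul_X_pow_eq_monomial, mul_assoc, ← smul_eq_C_mul]
  have key2 : (r * h) %ₘ f = ∑ l ∈ Finset.range m, (r.coeff l) • ((X ^ l * h) %ₘ f) := by
    rw [hrsum]
    show modByMonicHom f _ = _
    rw [map_sum]
    simp [modByMonicHom]
  rw [Matrix.mul_apply]
  show ((X ^ (k : ℕ) * (g * h)) %ₘ f).coeff j = _
  rw [key, key2, finset_sum_coeff]
  simp only [coeff_smul, smul_eq_mul]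
  exact (Fin.sum_univ_eq_sum_range
    (fun l => r.coeff l * ((X ^ l * h) %ₘ f).coeff j) m).symm

lemma res_map {S : Type*} [CommRing S] (m n : ℕ) (f g : R[X]) (φ : R →+* S) :
    res m n (f.map φ) (g.map φ) = φ (res m n f g) := by
  unfold res
  rw [RingHom.map_det]
  congr 1
  ext i j
  simp [_root_.sylvester, Matrix.map_apply, apply_ite φ, coeff_map]

lemma res_C_mul_left (m n : ℕ) (c : R) (f g : R[X]) :
    res m n (C c * f) g = c ^ n * res m n f g := by
  unfold res
  have h1 : sylvester m n (C c * f) g =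
      Matrix.diagonal (fun i : Fin (n + m) => if (i : ℕ) < n then c else 1) *
        sylvester m n f g := by
    ext i j
    rw [Matrix.diagonal_mul]
    by_cases h : (i : ℕ) < n <;> simp [_root_.sylvester, h, coeff_C_mul, mul_ite]
  rw [h1, Matrix.det_mul, Matrix.det_diagonal]
  congr 1
  rw [Fin.prod_univ_add]
  simp

lemma rotate_pow_apply (N k : ℕ) (i : Fin N) :
    (((finRotate N) ^ k) i : ℕ) = ((i : ℕ) + k) % N := by
  induction k with
  | zero => simp [Nat.mod_eq_of_lt i.isLt]
  | succ k ih =>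
    cases N with
    | zero => exact i.elim0
    | succ p =>
      have h2 : ((i : ℕ) + (k + 1)) % (p + 1) =
          (((i : ℕ) + k) % (p + 1) + 1 % (p + 1)) % (p + 1) := by
        conv_lhs => rw [← Nat.add_assoc]
        rw [Nat.add_mod]
      rw [pow_succ', Equiv.Perm.mul_apply, finRotate_succ_apply, Fin.add_def, ih,
        Fin.val_one', h2]


lemma sign_rotate_pow (N k : ℕ) :
    Equiv.Perm.sign ((finRotate N) ^ k) = (-1) ^ ((N - 1) * k) := by
  rw [map_pow]
  cases N with
  | zero =>
    have : finRotate 0 = 1 := Subsingleton.elim _ _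
    simp [this]
  | succ p => rw [sign_finRotate, ← pow_mul]


lemma neg_one_pow_convert (m n : ℕ) : ((-1 : R)) ^ ((n + m - 1) * n) = (-1) ^ (m * n) := by
  cases n with
  | zero => simp
  | succ k =>
    have h1 : k + 1 + m - 1 = k + m := by omega
    rw [h1, add_mul, pow_add, (Nat.even_mul_succ_self k).neg_one_pow, one_mul]

lemma res_monic (m n : ℕ) (f g : R[X]) (hf : f.Monic) (hfd : f.natDegree = m)
    (hg : g.natDegree ≤ n) :
    res m n f g = (-1) ^ (m * n) * (philMat m f g).det := by
  nontriviality R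
  have hfd' : f.degree = (m : ℕ) := hfd ▸ degree_eq_natDegree hf.ne_zero
  set P := philMat m f g with hP
  set Q : Matrix (Fin m) (Fin n) R := Matrix.of fun k j => ((X ^ (k : ℕ) * g) /ₘ f).coeff j
    with hQ
  set Amat : Matrix (Fin (n + m)) (Fin (n + m)) R :=
    (Matrix.fromBlocks 1 0 Q P).submatrix finSumFinEquiv.symm finSumFinEquiv.symm with hA
  set Emat := sylvester m n f 1 with hE
  -- degree facts about the quotient
  have hqcoeff : ∀ (b : Fin m) (x : ℕ), n ≤ x → ((X ^ (b : ℕ) * g) /ₘ f).coeff x = 0 := by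
    intro b x hx
    set q := (X ^ (b : ℕ) * g) /ₘ f with hq
    by_cases hq0 : q = 0
    · simp [hq0]
    · apply coeff_eq_zero_of_natDegree_lt
      have h1 : q.natDegree = (X ^ (b : ℕ) * g).natDegree - m := by
        rw [hq, natDegree_divByMonic _ hf, hfd]
      have h2 : (X ^ (b : ℕ) * g).natDegree ≤ (b : ℕ) + n := by
        refine le_trans (natDegree_mul_le) ?_
        have := natDegree_X_pow_le (R := R) (b : ℕ)
        omega
      have h3 : m ≤ (X ^ (b : ℕ) * g).natDegree := by
        have hd : ¬ (X ^ (b : ℕ) * g).degree < f.degree := by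
          rw [← divByMonic_eq_zero_iff hf]
          exact hq0
        have h3' := natDegree_le_natDegree (not_lt.1 hd)
        rw [hfd] at h3'
        exact h3'
      have hb : (b : ℕ) < m := b.isLt
      omega
  -- Step 1 : factorisation of the Sylvester matrix
  have step1 : sylvester m n f g = Amat * Emat := by
    ext i j
    rw [Matrix.mul_apply]
    obtain ⟨i', rfl⟩ : ∃ i', finSumFinEquiv i' = i := ⟨_, Equiv.apply_symm_apply _ _⟩
    rw [Fin.sum_univ_add (fun k => Amat (finSumFinEquiv i') k * Emat k j)]
    have hEcast : ∀ b' : Fin n, Emat (Fin.castAdd m b') j =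
        (if (b' : ℕ) ≤ (j : ℕ) then f.coeff ((j : ℕ) - (b' : ℕ)) else 0) := by
      intro b'
      rw [hE]
      simp only [_root_.sylvester, Fin.coe_castAdd]
      rw [if_pos b'.isLt]
    have hEnat : ∀ c : Fin m, Emat (Fin.natAdd n c) j =
        (if (c : ℕ) = (j : ℕ) then 1 else 0) := by
      intro c
      rw [hE]
      simp only [_root_.sylvester, Fin.coe_natAdd]
      rw [if_neg (by omega), Nat.add_sub_cancel_left]
      by_cases hcj : (c : ℕ) = (j : ℕ)
      · rw [if_pos hcj, if_pos (by omega)]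
        rw [coeff_one, if_pos (by omega)]
      · rw [if_neg hcj]
        split_ifs with h1
        · rw [coeff_one, if_neg (by omega)]
        · rfl
    cases i' with
    | inl a =>
      have ha : ((finSumFinEquiv (Sum.inl a : Fin n ⊕ Fin m)) : ℕ) = (a : ℕ) := by simp
      have h1 : ∀ b : Fin n,
          Amat (finSumFinEquiv (Sum.inl a)) (Fin.castAdd m b) * Emat (Fin.castAdd m b) j
            = (if a = b then 1 else 0) * Emat (Fin.castAdd m b) j := by
        intro b
        rw [hA]
        simp [Matrix.submatrix_apply, finSumFinEquiv_symm_apply_castAdd,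
          Equiv.symm_apply_apply, Matrix.one_apply]
      have h2 : ∀ b : Fin m,
          Amat (finSumFinEquiv (Sum.inl a)) (Fin.natAdd n b) * Emat (Fin.natAdd n b) j
            = 0 := by
        intro b
        rw [hA]
        simp [Matrix.submatrix_apply, finSumFinEquiv_symm_apply_natAdd,
          Equiv.symm_apply_apply]
      rw [Finset.sum_congr rfl (fun b _ => h1 b), Finset.sum_congr rfl (fun b _ => h2 b)]
      simp only [ite_mul, one_mul, zero_mul, Finset.sum_ite_eq, Finset.mem_univ, if_true,
        Finset.sum_const_zero, add_zero]
      rw [hEcast a]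
      simp only [_root_.sylvester, ha]
      rw [if_pos a.isLt]
    | inr b =>
      have hm : 0 < m := b.pos
      have hb : ((finSumFinEquiv (Sum.inr b : Fin n ⊕ Fin m)) : ℕ) = n + (b : ℕ) := by simp
      set q := (X ^ (b : ℕ) * g) /ₘ f with hq
      set r := (X ^ (b : ℕ) * g) %ₘ f with hr
      have hf1 : f ≠ 1 := by
        intro h1
        rw [h1, natDegree_one] at hfd
        omega
      have hrdeg : r.natDegree < m := by
        have h4 := natDegree_modByMonic_lt (X ^ (b : ℕ) * g) hf hf1
        rw [← hr, hfd] at h4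
        exact h4
      have hAcast : ∀ b' : Fin n,
          Amat (finSumFinEquiv (Sum.inr b)) (Fin.castAdd m b') = q.coeff (b' : ℕ) := by
        intro b'
        rw [hA]
        simp [Matrix.submatrix_apply, finSumFinEquiv_symm_apply_castAdd,
          Equiv.symm_apply_apply, hQ]
        rfl
      have hAnat : ∀ c : Fin m,
          Amat (finSumFinEquiv (Sum.inr b)) (Fin.natAdd n c) = r.coeff (c : ℕ) := by
        intro c
        rw [hA]
        simp [Matrix.submatrix_apply, finSumFinEquiv_symm_apply_natAdd,
          Equiv.symm_apply_apply, hP, philMat]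
        rfl
      rw [Finset.sum_congr rfl (fun (b' : Fin n) (_ : b' ∈ Finset.univ) => by
            rw [hAcast b', hEcast b']),
          Finset.sum_congr rfl (fun (c : Fin m) (_ : c ∈ Finset.univ) => by
            rw [hAnat c, hEnat c])]
      have hsum2 : (∑ c : Fin m, r.coeff (c : ℕ) * (if (c : ℕ) = (j : ℕ) then 1 else 0))
          = r.coeff (j : ℕ) := by
        by_cases hj : (j : ℕ) < m
        · rw [Finset.sum_eq_single (⟨(j : ℕ), hj⟩ : Fin m)]
          · simp
          · intro c _ hc
            rw [if_neg, mul_zero]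
            intro hcj
            exact hc (Fin.ext hcj)
          · intro habs
            exact absurd (Finset.mem_univ _) habs
        · rw [coeff_eq_zero_of_natDegree_lt (lt_of_lt_of_le hrdeg (not_lt.1 hj))]
          apply Finset.sum_eq_zero
          intro c _
          have := c.isLt
          rw [if_neg (by omega), mul_zero]
      have hsum1 : (∑ b' : Fin n, q.coeff (b' : ℕ) *
            (if (b' : ℕ) ≤ (j : ℕ) then f.coeff ((j : ℕ) - (b' : ℕ)) else 0))
          = (q * f).coeff (j : ℕ) := by
        rw [coeff_mul, Finset.Nat.sum_antidiagonal_eq_sum_range_succ_mk]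
        rw [Fin.sum_univ_eq_sum_range
          (fun x => q.coeff x * (if x ≤ (j : ℕ) then f.coeff ((j : ℕ) - x) else 0)) n]
        have hL : (∑ x ∈ Finset.range n,
              q.coeff x * (if x ≤ (j : ℕ) then f.coeff ((j : ℕ) - x) else 0))
            = ∑ x ∈ Finset.range (n + ((j : ℕ) + 1)),
              q.coeff x * (if x ≤ (j : ℕ) then f.coeff ((j : ℕ) - x) else 0) := by
          apply Finset.sum_subset (Finset.range_subset_range.2 (by omega))
          intro x _ hx
          rw [Finset.mem_range, not_lt] at hx
          rw [hqcoeff b x hx, zero_mul]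
        have hR : (∑ x ∈ Finset.range ((j : ℕ) + 1),
              q.coeff x * (if x ≤ (j : ℕ) then f.coeff ((j : ℕ) - x) else 0))
            = ∑ x ∈ Finset.range (n + ((j : ℕ) + 1)),
              q.coeff x * (if x ≤ (j : ℕ) then f.coeff ((j : ℕ) - x) else 0) := by
          apply Finset.sum_subset (Finset.range_subset_range.2 (by omega))
          intro x _ hx
          rw [Finset.mem_range, not_lt] at hx
          rw [if_neg (by omega), mul_zero]
        rw [hL, ← hR]
        apply Finset.sum_congr rfl
        intro x hx
        rw [Finset.mem_range] at hx
        rw [if_pos (by omega)]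
      rw [hsum1, hsum2]
      have hqf : q * f + r = g * X ^ (b : ℕ) := by
        have h5 := modByMonic_add_div (X ^ (b : ℕ) * g) f
        rw [hq, hr]
        linear_combination h5
      have htarget : sylvester m n f g (finSumFinEquiv (Sum.inr b)) j
          = (g * X ^ (b : ℕ)).coeff (j : ℕ) := by
        simp only [_root_.sylvester, hb]
        rw [if_neg (by omega), Nat.add_sub_cancel_left, coeff_mul_X_pow']
      rw [htarget, ← hqf, coeff_add]
  -- Step 2 : determinant of A
  have detA : Amat.det = P.det := by
    rw [hA, Matrix.det_submatrix_equiv_self, Matrix.det_fromBlocks_zero₁₂,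
      Matrix.det_one, one_mul]
  -- Step 3 : determinant of E
  have detE : Emat.det = (-1 : R) ^ ((n + m - 1) * n) := by
    set σ : Equiv.Perm (Fin (n + m)) := (finRotate (n + m)) ^ n with hσ
    have hσv : ∀ i : Fin (n + m), ((σ i : ℕ)) = ((i : ℕ) + n) % (n + m) :=
      fun i => rotate_pow_apply (n + m) n i
    have hσlt : ∀ i : Fin (n + m), (i : ℕ) < m → ((σ i : ℕ)) = (i : ℕ) + n := by
      intro i hi
      rw [hσv i, Nat.mod_eq_of_lt (by omega)]
    have hσge : ∀ i : Fin (n + m), m ≤ (i : ℕ) → ((σ i : ℕ)) = (i : ℕ) - m := by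
      intro i hi
      have hilt := i.isLt
      rw [hσv i, Nat.mod_eq_sub_mod (by omega)]
      have h6 : (i : ℕ) + n - (n + m) = (i : ℕ) - m := by omega
      rw [h6, Nat.mod_eq_of_lt (by omega)]
    have htri : (Emat.submatrix σ id).BlockTriangular OrderDual.toDual := by
      intro i j hij
      have hij' : (i : ℕ) < (j : ℕ) := hij
      have hjlt := j.isLt
      rw [Matrix.submatrix_apply, id_eq, hE]
      by_cases hi : (i : ℕ) < m
      · have hv := hσlt i hi
        simp only [_root_.sylvester, hv]
        rw [if_neg (by omega), Nat.add_sub_cancel]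
        rw [if_pos (by omega), coeff_one, if_neg (by omega)]
      · have hv := hσge i (not_lt.1 hi)
        simp only [_root_.sylvester, hv]
        rw [if_pos (by omega), if_pos (by omega)]
        apply coeff_eq_zero_of_natDegree_lt
        omega
    have hdiag : ∀ i : Fin (n + m), (Emat.submatrix σ id) i i = 1 := by
      intro i
      have hilt := i.isLt
      rw [Matrix.submatrix_apply, id_eq, hE]
      by_cases hi : (i : ℕ) < m
      · have hv := hσlt i hi
        simp only [_root_.sylvester, hv]
        rw [if_neg (by omega), Nat.add_sub_cancel]
        rw [if_pos (by omega), coeff_one, if_pos (by omega)]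
      · have hv := hσge i (not_lt.1 hi)
        simp only [_root_.sylvester, hv]
        rw [if_pos (by omega), if_pos (by omega)]
        have h7 : (i : ℕ) - ((i : ℕ) - m) = m := by omega
        rw [h7, ← hfd]
        exact hf.coeff_natDegree
    have hdet1 : (Emat.submatrix σ id).det = 1 := by
      rw [Matrix.det_of_lowerTriangular _ htri]
      exact Finset.prod_eq_one fun i _ => hdiag i
    have hperm := Matrix.det_permute σ Emat
    rw [hdet1] at hperm
    have hsign : (Equiv.Perm.sign σ : ℤ) = (-1 : ℤ) ^ ((n + m - 1) * n) := by
      rw [hσ, sign_rotate_pow]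
      simp
    have hsign' : ((Equiv.Perm.sign σ : ℤ) : R) = (-1 : R) ^ ((n + m - 1) * n) := by
      rw [hsign]
      push_cast
      ring
    rw [hsign'] at hperm
    have h8 : ((-1 : R) ^ ((n + m - 1) * n)) * ((-1 : R) ^ ((n + m - 1) * n)) = 1 := by
      rw [← pow_add, Even.neg_one_pow ⟨_, rfl⟩]
    calc Emat.det = 1 * Emat.det := (one_mul _).symm
      _ = ((-1 : R) ^ ((n + m - 1) * n)) * (((-1 : R) ^ ((n + m - 1) * n)) * Emat.det) := by
          rw [← mul_assoc, h8]
      _ = (-1 : R) ^ ((n + m - 1) * n) := by rw [← hperm, mul_one]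
  show (sylvester m n f g).det = _
  rw [step1, Matrix.det_mul, detA, detE, neg_one_pow_convert, mul_comm]

lemma res_mul_right_field {K : Type*} [Field K] (m n₁ n₂ : ℕ) (f g h : K[X])
    (hf : f.natDegree = m) (hf0 : f ≠ 0) (hg : g.natDegree ≤ n₁) (hh : h.natDegree ≤ n₂) :
    res m (n₁ + n₂) f (g * h) = res m n₁ f g * res m n₂ f h := by
  set c := f.leadingCoeff with hc
  have hc0 : c ≠ 0 := leadingCoeff_ne_zero.2 hf0
  set f₁ := C c⁻¹ * f with hf₁
  have hmonic : f₁.Monic := by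
    rw [hf₁, mul_comm]
    exact monic_mul_leadingCoeff_inv hf0
  have hfeq : f = C c * f₁ := by
    rw [hf₁, ← mul_assoc, ← C_mul, mul_inv_cancel₀ hc0, C_1, one_mul]
  have hd1 : f₁.natDegree = m := by
    rw [hf₁, natDegree_C_mul (inv_ne_zero hc0), hf]
  have hgh : (g * h).natDegree ≤ n₁ + n₂ := le_trans natDegree_mul_le (by omega)
  calc res m (n₁ + n₂) f (g * h)
      = c ^ (n₁ + n₂) * res m (n₁ + n₂) f₁ (g * h) := by
        conv_lhs => rw [hfeq]
        rw [res_C_mul_left]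
    _ = c ^ (n₁ + n₂) * ((-1) ^ (m * (n₁ + n₂)) *
          ((philMat m f₁ g).det * (philMat m f₁ h).det)) := by
        rw [res_monic m (n₁ + n₂) f₁ (g * h) hmonic hd1 hgh,
          philMat_mul m f₁ g h hmonic hd1, Matrix.det_mul]
    _ = (c ^ n₁ * ((-1) ^ (m * n₁) * (philMat m f₁ g).det)) *
          (c ^ n₂ * ((-1) ^ (m * n₂) * (philMat m f₁ h).det)) := by
        rw [pow_add, Nat.mul_add, pow_add]
        ring
    _ = res m n₁ f g * res m n₂ f h := by
        rw [← res_monic m n₁ f₁ g hmonic hd1 hg, ← res_monic m n₂ f₁ h hmonic hd1 hh,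
          ← res_C_mul_left, ← res_C_mul_left, ← hfeq]

section Generic

noncomputable def genPoly (d : ℕ) (v : ℕ → ℕ ⊕ (ℕ ⊕ ℕ)) :
    Polynomial (MvPolynomial (ℕ ⊕ (ℕ ⊕ ℕ)) ℤ) :=
  ∑ i ∈ Finset.range (d + 1), C (MvPolynomial.X (v i)) * X ^ i

lemma genPoly_coeff (d : ℕ) (v : ℕ → ℕ ⊕ (ℕ ⊕ ℕ)) (k : ℕ) :
    (genPoly d v).coeff k = if k ∈ Finset.range (d + 1) then MvPolynomial.X (v k) else 0 := by
  rw [genPoly, finset_sum_coeff]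
  simp [coeff_C_mul, coeff_X_pow, mul_ite, mul_one, mul_zero, Finset.sum_ite_eq]

lemma genPoly_natDegree_le (d : ℕ) (v : ℕ → ℕ ⊕ (ℕ ⊕ ℕ)) :
    (genPoly d v).natDegree ≤ d := by
  rw [natDegree_le_iff_coeff_eq_zero]
  intro N hN
  rw [genPoly_coeff, if_neg (by simp; omega)]

lemma genPoly_map {R : Type*} [CommRing R] (d : ℕ) (v : ℕ → ℕ ⊕ (ℕ ⊕ ℕ))
    (φ : MvPolynomial (ℕ ⊕ (ℕ ⊕ ℕ)) ℤ →+* R) (p : R[X]) (hp : p.natDegree ≤ d)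
    (hφ : ∀ i, i ≤ d → φ (MvPolynomial.X (v i)) = p.coeff i) :
    (genPoly d v).map φ = p := by
  rw [genPoly, Polynomial.map_sum]
  conv_rhs => rw [as_sum_range' p (d + 1) (by omega)]
  apply Finset.sum_congr rfl
  intro i hi
  rw [Finset.mem_range] at hi
  rw [Polynomial.map_mul, Polynomial.map_pow, Polynomial.map_C, Polynomial.map_X,
    C_mul_X_pow_eq_monomial, hφ i (by omega)]

end Generic

end Aux

/-- Multiplicativity of the univariate resultant in its second argument:
`Res(f, g·h) = Res(f, g) · Res(f, h)`. -/
theorem res_mul_right {R : Type*} [CommRing R] (m n₁ n₂ : ℕ) (f g h : R[X])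
    (hf : f.natDegree = m) (hg : g.natDegree = n₁) (hh : h.natDegree = n₂) :
    res m (n₁ + n₂) f (g * h) = res m n₁ f g * res m n₂ f h := by
  classical
  set A := MvPolynomial (ℕ ⊕ (ℕ ⊕ ℕ)) ℤ with hA
  set K := FractionRing A with hK
  set ψ : A →+* K := algebraMap A K with hψ
  have hψinj : Function.Injective ψ := IsFractionRing.injective A K
  set F := genPoly m Sum.inl with hF
  set G := genPoly n₁ (fun i => Sum.inr (Sum.inl i)) with hG
  set H := genPoly n₂ (fun i => Sum.inr (Sum.inr i)) with hH
  -- generic identity over K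
  have hFm : (F.map ψ).natDegree = m := by
    apply le_antisymm (le_trans (natDegree_map_le) (genPoly_natDegree_le _ _))
    apply le_natDegree_of_ne_zero
    rw [coeff_map, genPoly_coeff, if_pos (by simp)]
    exact (map_ne_zero_iff ψ hψinj).2 (MvPolynomial.X_ne_zero _)
  have hFm0 : F.map ψ ≠ 0 := by
    intro h0
    have := hFm
    rw [h0] at this
    have h1 : (F.map ψ).coeff m ≠ 0 := by
      rw [coeff_map, genPoly_coeff, if_pos (by simp)]
      exact (map_ne_zero_iff ψ hψinj).2 (MvPolynomial.X_ne_zero _)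
    rw [h0] at h1
    simp at h1
  have hKid : res m (n₁ + n₂) (F.map ψ) ((G.map ψ) * (H.map ψ))
      = res m n₁ (F.map ψ) (G.map ψ) * res m n₂ (F.map ψ) (H.map ψ) :=
    res_mul_right_field m n₁ n₂ _ _ _ hFm hFm0
      (le_trans (natDegree_map_le) (genPoly_natDegree_le _ _))
      (le_trans (natDegree_map_le) (genPoly_natDegree_le _ _))
  have hAid : res m (n₁ + n₂) F (G * H) = res m n₁ F G * res m n₂ F H := by
    apply hψinj
    rw [map_mul, ← res_map, ← res_map, ← res_map, Polynomial.map_mul]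
    exact hKid
  -- specialize
  set φ : A →+* R := (MvPolynomial.eval₂Hom (Int.castRingHom R)
    (Sum.elim (fun i => f.coeff i) (Sum.elim (fun i => g.coeff i) (fun i => h.coeff i)))) with hφ
  have hφF : F.map φ = f := by
    apply genPoly_map _ _ _ _ (by omega)
    intro i _
    simp [hφ]
  have hφG : G.map φ = g := by
    apply genPoly_map _ _ _ _ (by omega)
    intro i _
    simp [hφ]
  have hφH : H.map φ = h := by
    apply genPoly_map _ _ _ _ (by omega)
    intro i _
    simp [hφ]
  have := congrArg φ hAid
  rw [map_mul, ← res_map, ← res_map, ← res_map, Polynomial.map_mul, hφF, hφG, hφH] at this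
  exact this
end
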